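/- Let L, ν be natural numbers, h ∈ ℂ^L, f ∈ ℂ^{ν+1}, and N0 > 0. Then J(F) := 1 + (1/2π)∫_{−π}^{π}[log(1+|F(ω)|²) + M(ω)·(1+|F(ω)|²)] dω ≤ (1/2π)∫_{−π}^{π} log(1+|H(ω)|²/N0) dω; that is, the Forney-model channel shortener's information rate without feedback, for any target response F, is at most the Shannon capacity 𝒞 of the ISI channel. -/

import Mathlib

open Complex Real MeasureTheory

/-- DTFT of the channel taps `h ∈ ℂ^L`. -/
noncomputable def Hdtft {L : ℕ} (h : Fin L → ℂ) (ω : ℝ) : ℂ :=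
  ∑ ℓ : Fin L, h ℓ * Complex.exp (Complex.I * (ω : ℂ) * ((ℓ : ℕ) : ℂ))

/-- DTFT of the target-response taps `f ∈ ℂ^{ν+1}`. -/
noncomputable def Fdtft {ν : ℕ} (f : Fin (ν + 1) → ℂ) (ω : ℝ) : ℂ :=
  ∑ k : Fin (ν + 1), f k * Complex.exp (Complex.I * (ω : ℂ) * ((k : ℕ) : ℂ))

/-- The LMMSE kernel `M(ω) = −N0/(N0+|H(ω)|²)`. -/
noncomputable def Mker (N0 : ℝ) (H : ℝ → ℂ) (ω : ℝ) : ℝ :=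
  -N0 / (N0 + ‖H ω‖ ^ 2)

lemma key_ineq (N0 : ℝ) (hN0 : 0 < N0) (x y : ℝ) (hx : 0 ≤ x) (hy : 0 ≤ y) :
    Real.log (1 + x) + (-N0 / (N0 + y)) * (1 + x) ≤ Real.log (1 + y / N0) - 1 := by
  have hd : 0 < N0 + y := by linarith
  have ha : 0 < 1 + x := by linarith
  have ht : 0 < N0 / (N0 + y) := by positivity
  have hlog1 : Real.log (1 + y / N0) = - Real.log (N0 / (N0 + y)) := by
    rw [Real.log_div hN0.ne' hd.ne']
    rw [show 1 + y / N0 = (N0 + y) / N0 by field_simp]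
    rw [Real.log_div hd.ne' hN0.ne']
    ring
  have hmul : Real.log ((N0 / (N0 + y)) * (1 + x)) ≤ (N0 / (N0 + y)) * (1 + x) - 1 :=
    Real.log_le_sub_one_of_pos (by positivity)
  rw [Real.log_mul ht.ne' ha.ne'] at hmul
  rw [hlog1, neg_div]
  linarith [hmul]

lemma contH {L : ℕ} (h : Fin L → ℂ) : Continuous (Hdtft h) := by
  unfold Hdtft
  exact continuous_finset_sum _ fun ℓ _ => continuous_const.mul
    (Complex.continuous_exp.comp ((continuous_const.mul Complex.continuous_ofReal).mul continuous_const))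

lemma contF {ν : ℕ} (f : Fin (ν + 1) → ℂ) : Continuous (Fdtft f) := by
  unfold Fdtft
  exact continuous_finset_sum _ fun k _ => continuous_const.mul
    (Complex.continuous_exp.comp ((continuous_const.mul Complex.continuous_ofReal).mul continuous_const))

/-- `I_FOM^0 ≤ 𝒞`: the Forney-model channel shortener's rate without feedback, for
any target response `F`, is at most the Shannon capacity of the ISI channel. -/
theorem stmt10 (L ν : ℕ) (h : Fin L → ℂ) (f : Fin (ν + 1) → ℂ) (N0 : ℝ) (hN0 : 0 < N0) :
    1 + (1 / (2 * π)) *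
        ∫ ω in (-π)..π,
          (Real.log (1 + ‖Fdtft f ω‖ ^ 2) +
            Mker N0 (Hdtft h) ω * (1 + ‖Fdtft f ω‖ ^ 2)) ≤
      (1 / (2 * π)) *
        ∫ ω in (-π)..π, Real.log (1 + ‖Hdtft h ω‖ ^ 2 / N0) := by
  have hπ : 0 < π := Real.pi_pos
  set A := fun ω => Real.log (1 + ‖Fdtft f ω‖ ^ 2) +
      Mker N0 (Hdtft h) ω * (1 + ‖Fdtft f ω‖ ^ 2) with hA
  set B := fun ω => Real.log (1 + ‖Hdtft h ω‖ ^ 2 / N0) with hB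
  have hcF : Continuous fun ω => (‖Fdtft f ω‖) ^ 2 :=
    (continuous_norm.comp (contF f)).pow 2
  have hcH : Continuous fun ω => (‖Hdtft h ω‖) ^ 2 :=
    (continuous_norm.comp (contH h)).pow 2
  have hcA : Continuous A := by
    apply Continuous.add
    · exact (continuous_const.add hcF).log (fun ω => by show (1:ℝ) + ‖Fdtft f ω‖ ^ 2 ≠ 0; positivity)
    · apply Continuous.mul
      · unfold Mker
        exact continuous_const.div (continuous_const.add hcH) (fun ω => by positivity)
      · exact continuous_const.add hcF
  have hcB : Continuous B := by
    exact (continuous_const.add (hcH.div_const N0)).log (fun ω => by show (1:ℝ) + ‖Hdtft h ω‖ ^ 2 / N0 ≠ 0; positivity)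
  have hpt : ∀ ω ∈ Set.Icc (-π) π, A ω ≤ B ω - 1 := by
    intro ω _
    simpa [hA, hB, Mker] using key_ineq N0 hN0 (‖Fdtft f ω‖ ^ 2)
      (‖Hdtft h ω‖ ^ 2) (by positivity) (by positivity)
  have hint : (∫ ω in (-π)..π, A ω) ≤ ∫ ω in (-π)..π, (B ω - 1) := by
    apply intervalIntegral.integral_mono_on (by linarith)
      (hcA.intervalIntegrable _ _) ((hcB.sub continuous_const).intervalIntegrable _ _) hpt
  have hsub : (∫ ω in (-π)..π, (B ω - 1)) = (∫ ω in (-π)..π, B ω) - 2 * π := by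
    rw [intervalIntegral.integral_sub (hcB.intervalIntegrable _ _)
      (intervalIntegrable_const)]
    simp [intervalIntegral.integral_const]
    ring
  rw [hsub] at hint
  have h2π : (0:ℝ) < 2 * π := by linarith
  rw [div_mul_eq_mul_div, div_mul_eq_mul_div, one_mul, one_mul]
  have h2 := (div_le_div_iff_of_pos_right h2π).mpr hint
  rw [sub_div] at h2
  have : 2 * π / (2 * π) = 1 := div_self h2π.ne'
  nlinarith [h2]
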